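/- For every real number λ, det(λP + S) = −(1/(4a²b²))·[λ⁴ + (4z_c + a² + b²)λ³ + (4z_c(a² + b²) − 4(x_c² + y_c² − r²) + a²b²)λ² + 4(z_c a²b² − y_c² a² − x_c² b² + r²(a² + b²))λ] − r². -/

import Mathlib

open Matrix Polynomial

/-- The 4×4 matrix of the elliptic paraboloid x²/a² + y²/b² - z = 0. -/
noncomputable def Pmat (a b : ℝ) : Matrix (Fin 4) (Fin 4) ℝ :=
  !![1/a^2, 0, 0, 0;
     0, 1/b^2, 0, 0;
     0, 0, 0, -(1/2 : ℝ);
     0, 0, -(1/2 : ℝ), 0]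

/-- The 4×4 matrix of the sphere (x-x_c)² + (y-y_c)² + (z-z_c)² = r². -/
noncomputable def Smat (xc yc zc r : ℝ) : Matrix (Fin 4) (Fin 4) ℝ :=
  !![1, 0, 0, -xc;
     0, 1, 0, -yc;
     0, 0, 1, -zc;
     -xc, -yc, -zc, xc^2 + yc^2 + zc^2 - r^2]

/-- explicit expansion of det(λP + S). -/
theorem det_pencil_eq (a b r xc yc zc : ℝ) (ha : 0 < a) (hab : a ≤ b) (hr : 0 < r)
    (l : ℝ) :
    (l • Pmat a b + Smat xc yc zc r).det =
      -(1/(4*a^2*b^2)) *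
        (l^4 + (4*zc + a^2 + b^2) * l^3
          + (4*zc*(a^2 + b^2) - 4*(xc^2 + yc^2 - r^2) + a^2*b^2) * l^2
          + 4*(zc*a^2*b^2 - yc^2*a^2 - xc^2*b^2 + r^2*(a^2 + b^2)) * l)
      - r^2 := by
  have ha' : a ≠ 0 := ha.ne'
  have hb' : b ≠ 0 := (lt_of_lt_of_le ha hab).ne'
  simp only [Pmat, Smat]
  have h32 : Fin.succAbove (3 : Fin 4) (2 : Fin 3) = 2 := by decide
  simp [Matrix.det_succ_row_zero, Fin.sum_univ_succ, Fin.castSucc, Fin.castAdd, Fin.castLE, h32]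
  field_simp
  ring
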